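/- arXiv:1401.4679 — 2 statements merged into one kernel-verified Lean document; each statement's English description precedes it below -/
import Mathlib

section
/- (Hadamard–Fisher inequality) For a positive semidefinite Hermitian matrix A ∈ M_m and any two index sets α, β ⊆ {1,...,m}, det(A_{α∪β}) · det(A_{α∩β}) ≤ det(A_α) · det(A_β), where A_γ denotes the principal submatrix with rows and columns indexed by γ. -/
open Matrix
open scoped ComplexOrder

/-- The principal submatrix of `A` on the rows and columns indexed by the finite set `s`. -/
def principalSub {m : ℕ} (A : Matrix (Fin m) (Fin m) ℂ) (s : Finset (Fin m)) :
    Matrix {i // i ∈ s} {i // i ∈ s} ℂ :=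
  A.submatrix Subtype.val Subtype.val

section aux
variable {n l r : Type*} [Fintype n] [DecidableEq n] [Fintype l] [DecidableEq l]
  [Fintype r] [DecidableEq r]

lemma psd_det_nonneg {M : Matrix n n ℂ} (hM : M.PosSemidef) : 0 ≤ M.det := by
  rw [hM.1.det_eq_prod_eigenvalues]
  have : (0:ℝ) ≤ ∏ i, hM.1.eigenvalues i :=
    Finset.prod_nonneg fun i _ => hM.eigenvalues_nonneg i
  calc (0:ℂ) = ((0:ℝ):ℂ) := by norm_num
    _ ≤ ((∏ i, hM.1.eigenvalues i : ℝ) : ℂ) := by exact_mod_cast this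
    _ = ∏ i, (hM.1.eigenvalues i : ℂ) := by push_cast; ring

lemma herm_det_real {M : Matrix n n ℂ} (hM : M.IsHermitian) :
    M.det = (M.det.re : ℂ) := by
  have h1 : (starRingEnd ℂ) M.det = M.det := by
    have := congrArg Matrix.det hM.eq
    rw [Matrix.det_conjTranspose] at this
    exact this
  exact (Complex.conj_eq_iff_re.mp h1).symm

lemma posDef_of_posSemidef_isUnit {M : Matrix n n ℂ} (hM : M.PosSemidef)
    (h : IsUnit M.det) : M.PosDef := by
  exact hM.posDef_iff_isUnit.mpr ((isUnit_iff_isUnit_det M).mpr h)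

lemma det_one_add_psd {M : Matrix n n ℂ} (hM : M.PosSemidef) :
    ∃ rr : ℝ, 1 ≤ rr ∧ (1 + M).det = (rr : ℂ) := by
  set U : Matrix n n ℂ := (hM.1.eigenvectorUnitary : Matrix n n ℂ) with hUdef
  have hU : U * star U = 1 := Matrix.mem_unitaryGroup_iff.mp hM.1.eigenvectorUnitary.2
  set D : Matrix n n ℂ := diagonal (RCLike.ofReal ∘ hM.1.eigenvalues) with hDdef
  refine ⟨∏ i, (1 + hM.1.eigenvalues i), ?_, ?_⟩
  · have h0 : (1:ℝ) = ∏ _i : n, (1:ℝ) := by simp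
    rw [h0]
    apply Finset.prod_le_prod
    · intros; norm_num
    · intro i _; have := hM.eigenvalues_nonneg i; linarith
  have h1 : 1 + M = U * (1 + D) * star U := by
    rw [mul_add, add_mul, mul_one, hU]
    conv_lhs => rw [hM.1.spectral_theorem, Unitary.conjStarAlgAut_apply]
  have h2 : (1 + M).det = (1 + D).det := by
    have hU2 : star U * U = 1 := by rwa [mul_eq_one_comm] at hU
    rw [h1, det_mul, det_mul, mul_comm, ← mul_assoc, ← det_mul, hU2]
    simp
  rw [h2]
  have h3 : (1 : Matrix n n ℂ) + D = diagonal (fun i => 1 + (hM.1.eigenvalues i : ℂ)) := by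
    rw [hDdef, ← diagonal_one, diagonal_add]
    rfl
  rw [h3, det_diagonal]
  push_cast
  rfl

open scoped MatrixOrder in
lemma det_re_mono {X Y : Matrix n n ℂ} (hX : X.PosSemidef) (hXY : (Y - X).PosSemidef) :
    X.det.re ≤ Y.det.re := by
  have hY : Y.PosSemidef := by
    have := hX.add hXY
    simpa using this
  by_cases hd : IsUnit X.det
  · have hXpd : X.PosDef := posDef_of_posSemidef_isUnit hX hd
    set S := CFC.sqrt X with hSdef
    have hS : S * S = X := CFC.sqrt_mul_sqrt_self X hX.nonneg
    have hSh : S.IsHermitian := (CFC.sqrt_nonneg X).posSemidef.1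
    have hSd : IsUnit S.det := by
      have hds : S.det * S.det = X.det := by rw [← det_mul, hS]
      rw [isUnit_iff_ne_zero] at hd ⊢
      intro h0
      rw [h0, mul_zero] at hds
      exact hd hds.symm
    set E := Y - X with hEdef
    set Mm := S⁻¹ * E * S⁻¹ with hMmdef
    have hMm : Mm.PosSemidef := by
      have h1 : (S⁻¹)ᴴ = S⁻¹ := hSh.inv.eq
      have h2 := hXY.conjTranspose_mul_mul_same (B := S⁻¹)
      rwa [h1] at h2
    have hfact : Y = S * (1 + Mm) * S := by
      rw [mul_add, add_mul, mul_one, hS, hMmdef]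
      have h3 : S * (S⁻¹ * E * S⁻¹) * S = (S * S⁻¹) * E * (S⁻¹ * S) := by
        noncomm_ring
      rw [h3, mul_nonsing_inv _ hSd, nonsing_inv_mul _ hSd, one_mul, mul_one, hEdef]
      abel
    obtain ⟨rr, hr1, hr2⟩ := det_one_add_psd hMm
    have hYX : Y.det = X.det * rr := by
      rw [hfact, det_mul, det_mul, hr2, ← hS, det_mul]
      ring
    have hXre : X.det = (X.det.re : ℂ) := herm_det_real hX.1
    have hXnn : 0 ≤ X.det.re := by
      have := psd_det_nonneg hX
      exact (Complex.le_def.mp this).1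
    have hYre : Y.det.re = X.det.re * rr := by
      rw [hYX, hXre]
      push_cast
      simp [← Complex.ofReal_mul]
    rw [hYre]
    exact le_mul_of_one_le_right hXnn hr1
  · have h0 : X.det = 0 := by
      by_contra h
      exact hd (isUnit_iff_ne_zero.mpr h)
    rw [h0]
    simp only [Complex.zero_re]
    exact (Complex.le_def.mp (psd_det_nonneg hY)).1

lemma posDef_submatrix_inj {M : Matrix n n ℂ} (hM : M.PosDef) {e : l → n}
    (he : Function.Injective e) : (M.submatrix e e).PosDef :=
  hM.submatrix he

lemma fischer {M : Matrix (l ⊕ r) (l ⊕ r) ℂ} (hM : M.PosDef) :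
    M.det.re ≤ (M.submatrix Sum.inl Sum.inl).det.re * (M.submatrix Sum.inr Sum.inr).det.re := by
  classical
  set A := M.toBlocks₁₁ with hAdef
  set B := M.toBlocks₁₂ with hBdef
  set D := M.toBlocks₂₂ with hDdef
  have hsubA : M.submatrix Sum.inl Sum.inl = A := by ext i j; rfl
  have hsubD : M.submatrix Sum.inr Sum.inr = D := by ext i j; rfl
  have hA : A.PosDef := by rw [← hsubA]; exact posDef_submatrix_inj hM Sum.inl_injective
  have hD : D.PosDef := by rw [← hsubD]; exact posDef_submatrix_inj hM Sum.inr_injective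
  have hMB : M = fromBlocks A B Bᴴ D := by
    have h21 : M.toBlocks₂₁ = Bᴴ := by
      ext i j
      have := congrFun (congrFun hM.1.eq (Sum.inr i)) (Sum.inl j)
      simp only [conjTranspose_apply] at this
      simp only [hBdef, toBlocks₂₁, toBlocks₁₂, conjTranspose_apply, of_apply]
      exact this.symm
    rw [← h21]
    exact (fromBlocks_toBlocks M).symm
  haveI : Invertible A := A.invertibleOfIsUnitDet hA.det_pos.ne'.isUnit
  set T := D - Bᴴ * A⁻¹ * B with hTdef
  have hdet : M.det = A.det * T.det := by
    rw [hMB, det_fromBlocks₁₁, invOf_eq_nonsing_inv]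
  have hT : T.PosSemidef := by
    refine (PosDef.fromBlocks₁₁ B D hA).mp ?_
    rw [← hMB]
    exact hM.posSemidef
  have hDT : T.det.re ≤ D.det.re := by
    refine det_re_mono hT ?_
    rw [hTdef, sub_sub_cancel]
    exact (hA.inv.posSemidef).conjTranspose_mul_mul_same B
  have hAre : 0 < A.det.re := (Complex.lt_def.mp hA.det_pos).1
  have hTre : 0 ≤ T.det.re := (Complex.le_def.mp (psd_det_nonneg hT)).1
  have hMre : M.det.re = A.det.re * T.det.re := by
    rw [hdet, herm_det_real hA.1, herm_det_real hT.1, ← Complex.ofReal_mul]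
    simp
  rw [hMre, hsubA, hsubD]
  exact mul_le_mul_of_nonneg_left hDT (le_of_lt hAre)

end aux

section finsets
variable {m : ℕ}

def unionEquiv {Q P : Finset (Fin m)} (h : Disjoint Q P) :
    ({i // i ∈ Q} ⊕ {i // i ∈ P}) ≃ {i // i ∈ Q ∪ P} where
  toFun x := Sum.elim (fun q => ⟨q.1, Finset.mem_union_left _ q.2⟩)
    (fun p => ⟨p.1, Finset.mem_union_right _ p.2⟩) x
  invFun x := if hq : x.1 ∈ Q then Sum.inl ⟨x.1, hq⟩ else
    Sum.inr ⟨x.1, by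
      rcases Finset.mem_union.mp x.2 with h' | h'
      · exact absurd h' hq
      · exact h'⟩
  left_inv := by
    rintro (q | p)
    · simp
    · have hp : p.1 ∉ Q := fun hq => (Finset.disjoint_left.mp h hq) p.2
      simp [hp]
  right_inv := by
    rintro ⟨x, hx⟩
    by_cases hq : x ∈ Q <;> simp [hq]

lemma union_blocks (A : Matrix (Fin m) (Fin m) ℂ) {Q P : Finset (Fin m)}
    (h : Disjoint Q P) :
    (principalSub A (Q ∪ P)).submatrix (unionEquiv h) (unionEquiv h) =
      fromBlocks (principalSub A Q)
        (A.submatrix (Subtype.val : {i // i ∈ Q} → Fin m) (Subtype.val : {i // i ∈ P} → Fin m))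
        (A.submatrix (Subtype.val : {i // i ∈ P} → Fin m) (Subtype.val : {i // i ∈ Q} → Fin m))
        (principalSub A P) := by
  ext i j
  cases i <;> cases j <;> rfl

noncomputable def schurN (A : Matrix (Fin m) (Fin m) ℂ) (Q : Finset (Fin m)) :
    Matrix (Fin m) (Fin m) ℂ :=
  A - A.submatrix id (Subtype.val : {i // i ∈ Q} → Fin m) * (principalSub A Q)⁻¹ *
      A.submatrix (Subtype.val : {i // i ∈ Q} → Fin m) id

lemma schurN_principal (A : Matrix (Fin m) (Fin m) ℂ) (Q P : Finset (Fin m)) :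
    principalSub (schurN A Q) P = principalSub A P -
      A.submatrix (Subtype.val : {i // i ∈ P} → Fin m) (Subtype.val : {i // i ∈ Q} → Fin m) *
        (principalSub A Q)⁻¹ *
      A.submatrix (Subtype.val : {i // i ∈ Q} → Fin m) (Subtype.val : {i // i ∈ P} → Fin m) := by
  ext i j
  simp [schurN, principalSub, Matrix.mul_apply, Matrix.sub_apply]

lemma det_split (A : Matrix (Fin m) (Fin m) ℂ) {Q P : Finset (Fin m)}
    (hAQ : IsUnit (principalSub A Q).det) (h : Disjoint Q P) :
    (principalSub A (Q ∪ P)).det =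
      (principalSub A Q).det * (principalSub (schurN A Q) P).det := by
  haveI : Invertible (principalSub A Q) := (principalSub A Q).invertibleOfIsUnitDet hAQ
  rw [← Matrix.det_submatrix_equiv_self (unionEquiv h), union_blocks A h,
    det_fromBlocks₁₁, invOf_eq_nonsing_inv, schurN_principal]

-- new material
lemma principalSub_posDef {A : Matrix (Fin m) (Fin m) ℂ} (hA : A.PosDef)
    (s : Finset (Fin m)) : (principalSub A s).PosDef :=
  posDef_submatrix_inj hA Subtype.val_injective

lemma schur_posDef {A : Matrix (Fin m) (Fin m) ℂ} (hA : A.PosDef) {Q P : Finset (Fin m)}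
    (h : Disjoint Q P) : (principalSub (schurN A Q) P).PosDef := by
  have hQ : (principalSub A Q).PosDef := principalSub_posDef hA Q
  haveI : Invertible (principalSub A Q) :=
    (principalSub A Q).invertibleOfIsUnitDet hQ.det_pos.ne'.isUnit
  set B := A.submatrix (Subtype.val : {i // i ∈ Q} → Fin m)
    (Subtype.val : {i // i ∈ P} → Fin m) with hBdef
  have hC : A.submatrix (Subtype.val : {i // i ∈ P} → Fin m)
      (Subtype.val : {i // i ∈ Q} → Fin m) = Bᴴ := by
    ext i j
    have := congrFun (congrFun hA.1.eq i.1) j.1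
    simp only [conjTranspose_apply] at this ⊢
    simp only [hBdef, submatrix_apply]
    exact this.symm
  have hpsd : (fromBlocks (principalSub A Q) B Bᴴ (principalSub A P)).PosSemidef := by
    rw [← hC, ← union_blocks A h]
    exact (hA.posSemidef.submatrix _)
  have hS : (principalSub (schurN A Q) P).PosSemidef := by
    rw [schurN_principal, hC]
    exact (PosDef.fromBlocks₁₁ B (principalSub A P) hQ).mp hpsd
  refine posDef_of_posSemidef_isUnit hS ?_
  have hdet := det_split A hQ.det_pos.ne'.isUnit h
  have hUP : (principalSub A (Q ∪ P)).det ≠ 0 := (principalSub_posDef hA (Q ∪ P)).det_pos.ne'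
  rw [hdet] at hUP
  exact isUnit_iff_ne_zero.mpr (right_ne_zero_of_mul hUP)

lemma re_mul_real {z w : ℂ} (hz : z = (z.re : ℂ)) (hw : w = (w.re : ℂ)) :
    (z * w).re = z.re * w.re := by
  conv_lhs => rw [hz, hw, ← Complex.ofReal_mul]
  exact Complex.ofReal_re _

theorem koteljanskii_PD {A : Matrix (Fin m) (Fin m) ℂ}
    (hA : A.PosDef) (α β : Finset (Fin m)) :
    ((principalSub A (α ∪ β)).det).re * ((principalSub A (α ∩ β)).det).re ≤
      ((principalSub A α).det).re * ((principalSub A β).det).re := by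
  classical
  set Q := α ∩ β with hQdef
  set P := α \ β with hPdef
  set R := β \ α with hRdef
  have hQP : Q ∪ P = α := by
    rw [hQdef, hPdef, Finset.union_comm]; exact Finset.sdiff_union_inter α β
  have hQR : Q ∪ R = β := by
    rw [hQdef, hRdef, Finset.inter_comm, Finset.union_comm]; exact Finset.sdiff_union_inter β α
  have hQPR : Q ∪ (P ∪ R) = α ∪ β := by
    rw [← Finset.union_assoc, hQP]
    show α ∪ (β \ α) = α ∪ β
    exact Finset.union_sdiff_self_eq_union
  have hdQP : Disjoint Q P := by
    rw [hQdef, hPdef, Finset.disjoint_left]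
    intro a ha hb
    exact (Finset.mem_sdiff.mp hb).2 (Finset.mem_inter.mp ha).2
  have hdQR : Disjoint Q R := by
    rw [hQdef, hRdef, Finset.disjoint_left]
    intro a ha hb
    exact (Finset.mem_sdiff.mp hb).2 (Finset.mem_inter.mp ha).1
  have hdPR : Disjoint P R := by
    rw [hPdef, hRdef, Finset.disjoint_left]
    intro a ha hb
    exact (Finset.mem_sdiff.mp ha).2 (Finset.mem_sdiff.mp hb).1
  have hdQPR : Disjoint Q (P ∪ R) := Finset.disjoint_union_right.mpr ⟨hdQP, hdQR⟩
  have hQpd : (principalSub A Q).PosDef := principalSub_posDef hA Q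
  have hQdet : IsUnit (principalSub A Q).det := hQpd.det_pos.ne'.isUnit
  set N := schurN A Q with hNdef
  have d1 : (principalSub A α).det = (principalSub A Q).det * (principalSub N P).det := by
    rw [← hQP]; exact det_split A hQdet hdQP
  have d2 : (principalSub A β).det = (principalSub A Q).det * (principalSub N R).det := by
    rw [← hQR]; exact det_split A hQdet hdQR
  have d3 : (principalSub A (α ∪ β)).det =
      (principalSub A Q).det * (principalSub N (P ∪ R)).det := by
    rw [← hQPR]; exact det_split A hQdet hdQPR
  -- Fischer on the Schur complement
  have hSpd : (principalSub N (P ∪ R)).PosDef := schur_posDef hA hdQPR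
  set e := unionEquiv hdPR with hedef
  have hS'pd : ((principalSub N (P ∪ R)).submatrix e e).PosDef :=
    posDef_submatrix_inj hSpd e.injective
  have hfb := union_blocks N hdPR
  have hfi := fischer hS'pd
  rw [Matrix.det_submatrix_equiv_self] at hfi
  have hbl : ((principalSub N (P ∪ R)).submatrix e e).submatrix Sum.inl Sum.inl
      = principalSub N P := by
    rw [hfb]; ext i j; rfl
  have hbr : ((principalSub N (P ∪ R)).submatrix e e).submatrix Sum.inr Sum.inr
      = principalSub N R := by
    rw [hfb]; ext i j; rfl
  rw [hbl, hbr] at hfi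
  -- real parts
  have hPpd := schur_posDef hA hdQP
  have hRpd := schur_posDef hA hdQR
  have hq : 0 < (principalSub A Q).det.re := (Complex.lt_def.mp hQpd.det_pos).1
  have hsP : 0 < (principalSub N P).det.re := (Complex.lt_def.mp hPpd.det_pos).1
  have hsR : 0 < (principalSub N R).det.re := (Complex.lt_def.mp hRpd.det_pos).1
  have r1 : (principalSub A α).det.re
      = (principalSub A Q).det.re * (principalSub N P).det.re := by
    rw [d1]; exact re_mul_real (herm_det_real hQpd.1) (herm_det_real hPpd.1)
  have r2 : (principalSub A β).det.re
      = (principalSub A Q).det.re * (principalSub N R).det.re := by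
    rw [d2]; exact re_mul_real (herm_det_real hQpd.1) (herm_det_real hRpd.1)
  have r3 : (principalSub A (α ∪ β)).det.re
      = (principalSub A Q).det.re * (principalSub N (P ∪ R)).det.re := by
    rw [d3]; exact re_mul_real (herm_det_real hQpd.1) (herm_det_real hSpd.1)
  rw [r1, r2, r3, hQdef]
  have hkey := mul_le_mul_of_nonneg_left hfi (mul_pos hq hq).le
  nlinarith [hkey]

end finsets


/-- Hadamard–Fisher inequality: for a positive semidefinite Hermitian `m × m` matrix `A`
and index sets `α, β ⊆ {1,…,m}`,
`det(A_{α∪β}) · det(A_{α∩β}) ≤ det(A_α) · det(A_β)`.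
(The determinants of Hermitian principal submatrices are real, so the inequality is
stated between their real parts.) -/
theorem hadamard_fisher {m : ℕ} (A : Matrix (Fin m) (Fin m) ℂ)
    (hA : A.PosSemidef) (α β : Finset (Fin m)) :
    ((principalSub A (α ∪ β)).det).re * ((principalSub A (α ∩ β)).det).re ≤
      ((principalSub A α).det).re * ((principalSub A β).det).re := by
  classical
  set Aε : ℝ → Matrix (Fin m) (Fin m) ℂ :=
    fun ε => A + diagonal (fun _ => (ε : ℂ)) with hAε
  have hA0 : Aε 0 = A := by
    simp [hAε]
  have hPD : ∀ ε : ℝ, 0 < ε → (Aε ε).PosDef := by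
    intro ε hε
    refine Matrix.PosDef.posSemidef_add hA (Matrix.PosDef.diagonal ?_)
    intro i
    exact_mod_cast hε
  have cont : ∀ s : Finset (Fin m),
      Continuous (fun ε : ℝ => (principalSub (Aε ε) s).det.re) := by
    intro s
    apply Complex.continuous_re.comp
    apply Continuous.matrix_det
    apply continuous_matrix
    intro i j
    simp only [hAε, principalSub, submatrix_apply, Matrix.add_apply, diagonal]
    by_cases h : (i : Fin m) = (j : Fin m) <;>
      simp [h, of_apply] <;> fun_prop
  set g : ℝ → ℝ := fun ε =>
    (principalSub (Aε ε) α).det.re * (principalSub (Aε ε) β).det.re -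
      (principalSub (Aε ε) (α ∪ β)).det.re * (principalSub (Aε ε) (α ∩ β)).det.re with hg
  have hgc : Continuous g := ((cont α).mul (cont β)).sub ((cont (α ∪ β)).mul (cont (α ∩ β)))
  have hge : ∀ ε : ℝ, 0 < ε → 0 ≤ g ε := by
    intro ε hε
    have := koteljanskii_PD (hPD ε hε) α β
    simp only [hg]
    linarith
  have htend : Filter.Tendsto g (nhdsWithin 0 (Set.Ioi 0)) (nhds (g 0)) :=
    hgc.continuousAt.continuousWithinAt
  have h0 : 0 ≤ g 0 := by
    refine ge_of_tendsto htend ?_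
    filter_upwards [self_mem_nhdsWithin] with x hx
    exact hge x hx
  rw [hg] at h0
  simp only [hA0] at h0
  linarith
end

section
/- If σ is a real symmetric 2N×2N matrix satisfying σ + iΩ ≥ 0 (as a Hermitian matrix), then σ is positive definite (σ > 0). -/
open Matrix
open scoped ComplexOrder
/-- The standard `2N × 2N` symplectic form: block diagonal with `N` blocks `[[0,1],[-1,0]]`. -/
def Omega (N : ℕ) : Matrix (Fin N × Fin 2) (Fin N × Fin 2) ℝ :=
  fun p q => if p.1 = q.1 then !![0, 1; -1, 0] p.2 q.2 else 0

lemma Omega_sq (N : ℕ) : Omega N * Omega N = -1 := by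
  ext ⟨i,a⟩ ⟨j,b⟩
  simp only [Matrix.mul_apply, Omega, Fintype.sum_prod_type]
  rw [Finset.sum_eq_single i]
  · by_cases hij : i = j
    · subst hij
      simp only [if_pos rfl, Matrix.neg_apply, Matrix.one_apply, Prod.mk.injEq]
      fin_cases a <;> fin_cases b <;> simp [Fin.sum_univ_two]
    · simp [hij, Matrix.one_apply, Prod.ext_iff]
  · intro k _ hk
    by_cases h1 : i = k
    · exact absurd h1.symm hk
    · simp [h1]
  · simp

lemma Omega_transpose (N : ℕ) : (Omega N)ᵀ = -(Omega N) := by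
  ext ⟨i,a⟩ ⟨j,b⟩
  simp only [Matrix.transpose_apply, Omega, Matrix.neg_apply, eq_comm (a := i)]
  by_cases hij : j = i
  · subst hij; fin_cases a <;> fin_cases b <;> simp
  · simp [hij]

/-- If a real symmetric `2N × 2N` matrix `σ` satisfies the bona fide condition
`σ + iΩ ≥ 0` (as a Hermitian matrix), then `σ` is positive definite. -/
theorem bona_fide_implies_posdef {N : ℕ}
    (σ : Matrix (Fin N × Fin 2) (Fin N × Fin 2) ℝ) (hsym : σᵀ = σ)
    (h : (Matrix.of (fun p q => (σ p q : ℂ) + Complex.I * (Omega N p q : ℂ))).PosSemidef) :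
    σ.PosDef := by
  have hherm : σ.IsHermitian := hsym
  refine posDef_iff_dotProduct_mulVec.mpr ⟨hherm, fun x hx => ?_⟩
  set M : Matrix (Fin N × Fin 2) (Fin N × Fin 2) ℂ :=
    Matrix.of (fun p q => (σ p q : ℂ) + Complex.I * (Omega N p q : ℂ)) with hM
  set z : Fin N × Fin 2 → ℂ := fun p => (x p : ℂ) with hz
  -- xᵀ Ω x = 0
  have hskew : x ⬝ᵥ Omega N *ᵥ x = 0 := by
    have h1 : x ⬝ᵥ Omega N *ᵥ x = -(x ⬝ᵥ Omega N *ᵥ x) := by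
      conv_lhs => rw [show Omega N = -(Omega N)ᵀ by rw [Omega_transpose, neg_neg]]
      rw [Matrix.neg_mulVec, dotProduct_neg, Matrix.mulVec_transpose,
        dotProduct_comm, ← Matrix.dotProduct_mulVec]
    linarith
  have hquad : star z ⬝ᵥ M *ᵥ z
      = ((x ⬝ᵥ σ *ᵥ x : ℝ) : ℂ) + Complex.I * ((x ⬝ᵥ Omega N *ᵥ x : ℝ) : ℂ) := by
    simp only [hM, hz, dotProduct, Matrix.mulVec, Matrix.of_apply, Pi.star_apply,
      RCLike.star_def, Complex.conj_ofReal, Complex.ofReal_sum, Complex.ofReal_mul,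
      Finset.mul_sum]
    rw [← Finset.sum_add_distrib]
    refine Finset.sum_congr rfl fun p _ => ?_
    rw [← Finset.sum_add_distrib]
    exact Finset.sum_congr rfl fun q _ => by ring
  rw [hskew] at hquad
  simp only [Complex.ofReal_zero, mul_zero, add_zero] at hquad
  have hge : 0 ≤ x ⬝ᵥ σ *ᵥ x := by
    have := h.dotProduct_mulVec_nonneg z
    rw [hquad] at this
    exact_mod_cast this
  rcases lt_or_eq_of_le hge with hlt | heq
  · exact hlt
  exfalso
  have hMz : M *ᵥ z = 0 := by
    rw [← h.dotProduct_mulVec_zero_iff, hquad, ← heq, Complex.ofReal_zero]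
  have hOx : Omega N *ᵥ x = 0 := by
    funext p
    have hcomp : (M *ᵥ z) p = (((σ *ᵥ x) p : ℝ) : ℂ) + Complex.I * (((Omega N *ᵥ x) p : ℝ) : ℂ) := by
      simp only [hM, hz, Matrix.mulVec, dotProduct, Matrix.of_apply, Complex.ofReal_sum,
        Complex.ofReal_mul, Finset.mul_sum]
      rw [← Finset.sum_add_distrib]
      exact Finset.sum_congr rfl fun q _ => by ring
    rw [hMz] at hcomp
    have him := congrArg Complex.im hcomp.symm
    simpa using him
  have hx0 : x = 0 := by
    have h2 : Omega N *ᵥ (Omega N *ᵥ x) = 0 := by rw [hOx, Matrix.mulVec_zero]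
    rw [Matrix.mulVec_mulVec, Omega_sq, Matrix.neg_mulVec, Matrix.one_mulVec,
      neg_eq_zero] at h2
    exact h2
  exact hx hx0
end
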